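/- Let f : ℝ^d → ℝ^d be permutation equivariant, meaning f(Px) = P f(x) for every d×d permutation matrix P and every x ∈ ℝ^d, and suppose the graph of f is cyclically monotone. Then f is weakly intra-order preserving: for every x ∈ ℝ^d and every pair of indices i, j ∈ {1,...,d}, (x_i − x_j)(f_i(x) − f_j(x)) ≥ 0. In particular, if x_i = x_j then f_i(x) = f_j(x). -/

import Mathlib

open RealInnerProductSpace

/-- A set `Γ ⊆ ℝ^d × ℝ^d` is cyclically monotone if for every family
`(x_0, y_0), ..., (x_m, y_m)` of points of `Γ`,
`Σ_i ⟪y_i, x_{i+1} − x_i⟫ ≤ 0`, indices taken cyclically. -/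
def CyclicallyMonotone {d : ℕ}
    (Γ : Set (EuclideanSpace ℝ (Fin d) × EuclideanSpace ℝ (Fin d))) : Prop :=
  ∀ (m : ℕ) (p : Fin (m + 1) → EuclideanSpace ℝ (Fin d) × EuclideanSpace ℝ (Fin d)),
    (∀ a, p a ∈ Γ) → ∑ a, ⟪(p a).2, (p (a + 1)).1 - (p a).1⟫ ≤ 0

/-- a permutation-equivariant map `f : ℝ^d → ℝ^d` with a
cyclically monotone graph is weakly intra-order preserving:
`(x_i − x_j)(f_i(x) − f_j(x)) ≥ 0` for all `x` and indices `i, j`; in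
particular `x_i = x_j` implies `f_i(x) = f_j(x)`. -/
theorem perm_equivariant_cyclically_monotone_weakly_IOP (d : ℕ)
    (f : EuclideanSpace ℝ (Fin d) → EuclideanSpace ℝ (Fin d))
    (hequiv : ∀ (σ : Equiv.Perm (Fin d)) (x : EuclideanSpace ℝ (Fin d)),
      f (WithLp.toLp 2 (fun i => x (σ i))) = WithLp.toLp 2 (fun i => f x (σ i)))
    (hcm : CyclicallyMonotone {p | ∃ x : EuclideanSpace ℝ (Fin d), p = (x, f x)}) :
    (∀ (x : EuclideanSpace ℝ (Fin d)) (i j : Fin d),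
      0 ≤ (x i - x j) * (f x i - f x j)) ∧
    (∀ (x : EuclideanSpace ℝ (Fin d)) (i j : Fin d),
      x i = x j → f x i = f x j) := by
  constructor
  · intro x i j
    by_cases hij : i = j
    · subst hij; simp
    set y : EuclideanSpace ℝ (Fin d) := WithLp.toLp 2 (fun k => x (Equiv.swap i j k)) with hy
    have hfy : f y = WithLp.toLp 2 (fun k => f x (Equiv.swap i j k)) := hequiv (Equiv.swap i j) x
    have h2 := hcm 1 (fun a => if a = 0 then (x, f x) else (y, f y))
      (by intro a; by_cases h : a = 0 <;> simp [h])
    rw [Fin.sum_univ_two] at h2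
    simp only [show (0 : Fin 2) + 1 = 1 by decide, show (1 : Fin 2) + 1 = 0 by decide,
      if_pos rfl, if_neg (by decide : (1 : Fin 2) ≠ 0), if_true] at h2
    have hinner : ⟪f x, y - x⟫ + ⟪f y, x - y⟫
        = ∑ k : Fin d, (f x (Equiv.swap i j k) - f x k) * (x k - x (Equiv.swap i j k)) := by
      rw [hfy]
      simp only [PiLp.inner_apply, RCLike.inner_apply, conj_trivial, PiLp.sub_apply,
        ← Finset.sum_add_distrib]
      apply Finset.sum_congr rfl
      intro k _
      simp only [hy, PiLp.toLp_apply]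
      ring
    rw [hinner] at h2
    have hsum : ∑ k : Fin d, (f x (Equiv.swap i j k) - f x k) * (x k - x (Equiv.swap i j k))
        = -2 * ((x i - x j) * (f x i - f x j)) := by
      rw [← Finset.sum_subset (Finset.subset_univ {i, j})]
      · rw [Finset.sum_pair hij, Equiv.swap_apply_left, Equiv.swap_apply_right]
        ring
      · intro k _ hk
        simp only [Finset.mem_insert, Finset.mem_singleton, not_or] at hk
        rw [Equiv.swap_apply_of_ne_of_ne hk.1 hk.2]
        ring
    rw [hsum] at h2
    nlinarith
  · intro x i j h
    have hy : WithLp.toLp 2 (fun k => x (Equiv.swap i j k)) = x := by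
      ext k
      simp only [PiLp.toLp_apply]
      rcases eq_or_ne k i with rfl | hki
      · rw [Equiv.swap_apply_left, h]
      rcases eq_or_ne k j with rfl | hkj
      · rw [Equiv.swap_apply_right, h]
      · rw [Equiv.swap_apply_of_ne_of_ne hki hkj]
    have := hequiv (Equiv.swap i j) x
    rw [show WithLp.toLp 2 (fun k => x (Equiv.swap i j k)) = x from hy] at this
    have := congrArg (fun v => v i) this
    simp only [PiLp.toLp_apply, Equiv.swap_apply_left] at this
    exact this
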